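/- Assume c_j > 0 and l_j > 0 for all j, q_j = l_j/c_j, and the q_j are pairwise distinct. Then f cannot have local maxima on P both in the open main orthant and in the side orthant: there do not exist points x₀, x₁ ∈ P, both local maxima of f on P, such that every coordinate of x₀ is strictly positive while x₁ satisfies x₁_j > 0 for j = 1,…,n−1 and x₁_n < 0. -/

import Mathlib

open scoped BigOperators
open Set Filter Topology

/-- If `f` is strictly antitone on an open interval and has a derivative at an interior
point, that derivative is nonpositive. -/
lemma hasDerivAt_nonpos_of_strictAntiOn {f : ℝ → ℝ} {a b x d : ℝ}
    (hx : x ∈ Set.Ioo a b) (hf : HasDerivAt f d x)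
    (hs : StrictAntiOn f (Set.Ioo a b)) : d ≤ 0 := by
  have h1 : Tendsto (slope f x) (𝓝[≠] x) (𝓝 d) := hasDerivAt_iff_tendsto_slope.mp hf
  have h2 : Tendsto (slope f x) (𝓝[>] x) (𝓝 d) :=
    h1.mono_left (nhdsWithin_mono x (fun y hy => ne_of_gt hy))
  have hev : ∀ᶠ y in 𝓝[>] x, slope f x y ≤ 0 := by
    filter_upwards [Ioo_mem_nhdsGT_of_mem ⟨le_refl x, hx.2⟩] with y hy
    have hlt : f y < f x := hs hx ⟨lt_trans hx.1 hy.1, hy.2⟩ hy.1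
    rw [slope_def_field]
    apply div_nonpos_of_nonpos_of_nonneg (by linarith) (by linarith [hy.1])
  exact le_of_tendsto h2 hev

/-- Second derivative test (necessary condition): if `g` has a local max at `0`,
with `g' 0 = 0`, then the second derivative at `0` is nonpositive. -/
lemma second_deriv_nonpos_of_isLocalMax {g g' : ℝ → ℝ} {G2 : ℝ}
    (hg : ∀ t, HasDerivAt g (g' t) t) (h0 : g' 0 = 0)
    (hg' : HasDerivAt g' G2 0) (hmax : IsLocalMax g 0) : G2 ≤ 0 := by
  by_contra hpos
  push_neg at hpos
  have h1 : Tendsto (slope g' 0) (𝓝[≠] 0) (𝓝 G2) := hasDerivAt_iff_tendsto_slope.mp hg'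
  have hev : ∀ᶠ u in 𝓝[≠] (0:ℝ), 0 < slope g' 0 u := h1.eventually (eventually_gt_nhds hpos)
  rw [eventually_nhdsWithin_iff] at hev
  obtain ⟨δ₁, hδ₁, hs1⟩ := Metric.eventually_nhds_iff.mp hev
  obtain ⟨δ₂, hδ₂, hs2⟩ := Metric.eventually_nhds_iff.mp hmax
  set r := min δ₁ δ₂ with hr
  have hrpos : 0 < r := lt_min hδ₁ hδ₂
  have hg'pos : ∀ t, 0 < t → t < r → 0 < g' t := by
    intro t ht htr
    have h := hs1 (y := t) (by rw [Real.dist_eq, sub_zero]; rw [abs_of_pos ht]; exact lt_of_lt_of_le htr (min_le_left _ _)) (by simp [ne_of_gt ht])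
    rw [slope_def_field, h0, sub_zero, sub_zero] at h
    rcases div_pos_iff.mp h with ⟨hnum, _⟩ | ⟨_, hden⟩
    · exact hnum
    · linarith
  have hmono : StrictMonoOn g (Set.Icc 0 (r/2)) := by
    apply strictMonoOn_of_deriv_pos (convex_Icc _ _)
    · exact fun t _ => (hg t).continuousAt.continuousWithinAt
    · intro t ht
      rw [interior_Icc] at ht
      rw [(hg t).deriv]
      exact hg'pos t ht.1 (lt_of_lt_of_le ht.2 (by linarith))
  have hlt : g 0 < g (r/2) :=
    hmono ⟨le_refl 0, by linarith⟩ ⟨by linarith, le_refl _⟩ (by linarith)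
  have hrle : r ≤ δ₂ := min_le_right _ _
  have hle : g (r/2) ≤ g 0 := hs2 (by rw [Real.dist_eq, sub_zero, abs_of_pos (by linarith)]; linarith)
  linarith

set_option maxHeartbeats 1000000 in
/-- Under (A1)–(A4), with `cⱼ > 0`, `lⱼ > 0` and `qⱼ = lⱼ/cⱼ` pairwise
distinct, `f` cannot have a local maximum on `P` in the open main orthant and another
one in the side orthant `{x : xⱼ > 0 for j ≠ n, xₙ < 0}`. -/
theorem stmt_11 (n : ℕ) (hn : 1 ≤ n) (φ ψ : ℝ → ℝ)
    (hφC : ContDiff ℝ 2 φ)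
    (hodd : ∀ x : ℝ, φ (-x) = -φ x)
    (hφ' : ∀ x : ℝ, 0 < deriv φ x)
    (hφ'' : ∀ x : ℝ, x ≠ 0 → x * deriv (deriv φ) x < 0)
    (hlim : ∃ L : ℝ, Filter.Tendsto φ Filter.atTop (nhds L))
    (hψ : ∀ y : ℝ, 0 < y → y ≤ deriv φ 0 → 0 ≤ ψ y ∧ deriv φ (ψ y) = y)
    (hψinv : ∀ x : ℝ, 0 ≤ x → ψ (deriv φ x) = x)
    (hA2 : ∀ p q : ℝ, 0 < q → q < p →
      StrictMonoOn (fun β => deriv ψ (β * p) / deriv ψ (β * q))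
        (Set.Ioo 0 (deriv φ 0 / p)))
    (hA3 : ∀ qj qn ql : ℝ, 0 < qj → qj < qn → qn < ql →
      StrictMonoOn (fun β => deriv (fun t => deriv ψ (t * qj) / deriv ψ (t * qn)) β /
          deriv (fun t => deriv ψ (t * ql) / deriv ψ (t * qn)) β)
        (Set.Ioo 0 (deriv φ 0 / ql)) ∨
      StrictAntiOn (fun β => deriv (fun t => deriv ψ (t * qj) / deriv ψ (t * qn)) β /
          deriv (fun t => deriv ψ (t * ql) / deriv ψ (t * qn)) β)
        (Set.Ioo 0 (deriv φ 0 / ql)))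
    (hA4 : ∀ p q : ℝ, 0 < q → q < p →
      StrictAntiOn (fun β => ψ (β * p) / ψ (β * q))
        (Set.Ioo 0 (deriv φ 0 / p)))
    (c l q : Fin (n + 1) → ℝ) (hc : ∀ j, 0 < c j) (hl : ∀ j, 0 < l j)
    (hq : ∀ j, q j = l j / c j) (hqinj : Function.Injective q) (b : ℝ)
    (f : EuclideanSpace ℝ (Fin (n + 1)) → ℝ)
    (hf : ∀ x : EuclideanSpace ℝ (Fin (n + 1)), f x = ∑ i, c i * φ (x i))
    (P : Set (EuclideanSpace ℝ (Fin (n + 1))))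
    (hP : P = {x : EuclideanSpace ℝ (Fin (n + 1)) | ∑ j, l j * x j = b}) :
    ¬ ∃ x₀ x₁ : EuclideanSpace ℝ (Fin (n + 1)),
      x₀ ∈ P ∧ x₁ ∈ P ∧
      (∃ ε > 0, ∀ x ∈ P, ‖x - x₀‖ < ε → f x ≤ f x₀) ∧
      (∃ ε > 0, ∀ x ∈ P, ‖x - x₁‖ < ε → f x ≤ f x₁) ∧
      (∀ j, 0 < x₀ j) ∧
      (∀ j, j ≠ Fin.last n → 0 < x₁ j) ∧ x₁ (Fin.last n) < 0 := by
  rintro ⟨x₀, x₁, hx₀P, hx₁P, hloc₀, hloc₁, hpos₀, hpos₁, hneg₁⟩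
  -- ## Basic facts about φ
  have hd1 : Differentiable ℝ φ := hφC.differentiable (by norm_num)
  have hφC' : ContDiff ℝ 1 (deriv φ) := by
    have h2 : ContDiff ℝ ((1 : WithTop ℕ∞) + 1) φ := by
      have h3 : ((1 : WithTop ℕ∞) + 1) = 2 := by norm_num
      rw [h3]; exact_mod_cast hφC
    exact (contDiff_succ_iff_deriv.mp h2).2.2
  have hd2 : Differentiable ℝ (deriv φ) := hφC'.differentiable (by norm_num)
  have hφ''neg : ∀ z : ℝ, 0 < z → deriv (deriv φ) z < 0 := by
    intro z hz
    have := hφ'' z (ne_of_gt hz); nlinarith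
  have hφ''pos : ∀ z : ℝ, z < 0 → 0 < deriv (deriv φ) z := by
    intro z hz
    have := hφ'' z (ne_of_lt hz); nlinarith
  have hφ'anti : StrictAntiOn (deriv φ) (Set.Ici 0) := by
    apply strictAntiOn_of_deriv_neg (convex_Ici 0) hd2.continuous.continuousOn
    intro z hz
    rw [interior_Ici] at hz
    exact hφ''neg z hz
  have hφ'lt : ∀ z : ℝ, 0 < z → deriv φ z < deriv φ 0 :=
    fun z hz => hφ'anti (Set.self_mem_Ici) (Set.mem_Ici.mpr hz.le) hz
  have hφ'even : ∀ x : ℝ, deriv φ (-x) = deriv φ x := by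
    intro x
    have h1 : HasDerivAt (fun y : ℝ => -φ (-y)) (deriv φ (-x)) x := by
      have h2 : HasDerivAt φ (deriv φ (-x)) (-x) := (hd1 (-x)).hasDerivAt
      have h3 := (h2.comp x (hasDerivAt_neg x)).neg
      simpa [Function.comp_def, Pi.neg_def] using h3
    have h4 : (fun y : ℝ => -φ (-y)) = φ := by
      funext y; rw [hodd]; ring
    rw [h4] at h1
    rw [← h1.deriv]
  have hφ''odd : ∀ x : ℝ, deriv (deriv φ) (-x) = -deriv (deriv φ) x := by
    intro x
    have h1 : HasDerivAt (fun y : ℝ => deriv φ (-y)) (-deriv (deriv φ) (-x)) x := by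
      have h2 : HasDerivAt (deriv φ) (deriv (deriv φ) (-x)) (-x) := (hd2 (-x)).hasDerivAt
      have h3 := h2.comp x (hasDerivAt_neg x)
      simpa [Function.comp_def] using h3
    have h4 : (fun y : ℝ => deriv φ (-y)) = deriv φ := by
      funext y; rw [hφ'even]
    rw [h4] at h1
    have h5 := h1.deriv
    linarith
  -- ## Facts about ψ on the open interval I = Ioo 0 (deriv φ 0)
  set D := deriv φ 0 with hD
  have hDpos : 0 < D := hφ' 0
  have hψ_pos : ∀ y : ℝ, y ∈ Set.Ioo 0 D → 0 < ψ y := by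
    intro y hy
    rcases (hψ y hy.1 hy.2.le).1.lt_or_eq with h | h
    · exact h
    · exfalso
      have := (hψ y hy.1 hy.2.le).2
      rw [← h] at this
      exact absurd this (ne_of_gt hy.2)
  have hψ_eq : ∀ y : ℝ, y ∈ Set.Ioo 0 D → deriv φ (ψ y) = y :=
    fun y hy => (hψ y hy.1 hy.2.le).2
  have hψ_anti : ∀ y y' : ℝ, y ∈ Set.Ioc 0 D → y' ∈ Set.Ioc 0 D → y ≤ y' → ψ y' ≤ ψ y := by
    intro y y' hy hy' hle
    by_contra hcon
    push_neg at hcon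
    have h1 : deriv φ (ψ y) > deriv φ (ψ y') :=
      hφ'anti (Set.mem_Ici.mpr (hψ y hy.1 hy.2).1) (Set.mem_Ici.mpr (hψ y' hy'.1 hy'.2).1) hcon
    rw [(hψ y hy.1 hy.2).2, (hψ y' hy'.1 hy'.2).2] at h1
    linarith
  have hψ_lt : ∀ y y' : ℝ, y ∈ Set.Ioo 0 D → y' ∈ Set.Ioo 0 D → y < y' → ψ y' < ψ y := by
    intro y y' hy hy' hlt
    rcases (hψ_anti y y' (Set.mem_Ioc.mpr ⟨hy.1, hy.2.le⟩) (Set.mem_Ioc.mpr ⟨hy'.1, hy'.2.le⟩) hlt.le).lt_or_eq with h | h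
    · exact h
    · exfalso
      have h1 : deriv φ (ψ y) = y := hψ_eq y hy
      have h2 : deriv φ (ψ y') = y' := hψ_eq y' hy'
      rw [← h] at h1
      rw [h1] at h2
      exact absurd h2 (ne_of_lt hlt)
  have hψ_cont : ∀ y : ℝ, y ∈ Set.Ioo 0 D → ContinuousAt ψ y := by
    intro y₀ hy₀
    have hψy₀pos := hψ_pos y₀ hy₀
    rw [Metric.continuousAt_iff]
    intro ε hε
    set ε' := min (ε/2) (ψ y₀ / 2) with hε'def
    have hε'pos : 0 < ε' := lt_min (by linarith) (by linarith)
    have hε'lt : ε' < ψ y₀ := lt_of_le_of_lt (min_le_right _ _) (by linarith)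
    have hε'le : ε' ≤ ε/2 := min_le_left _ _
    set u₁ := deriv φ (ψ y₀ + ε') with hu₁def
    set u₂ := deriv φ (ψ y₀ - ε') with hu₂def
    have hy₀eq : deriv φ (ψ y₀) = y₀ := hψ_eq y₀ hy₀
    have h₁lt : u₁ < y₀ := by
      rw [← hy₀eq]
      exact hφ'anti (Set.mem_Ici.mpr hψy₀pos.le) (Set.mem_Ici.mpr (by linarith)) (by linarith)
    have h₂gt : y₀ < u₂ := by
      rw [← hy₀eq]
      exact hφ'anti (Set.mem_Ici.mpr (by linarith)) (Set.mem_Ici.mpr hψy₀pos.le) (by linarith)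
    have hφ'leD : ∀ z : ℝ, 0 ≤ z → deriv φ z ≤ D := by
      intro z hz
      rcases hz.lt_or_eq with h | h
      · exact (hφ'lt z h).le
      · rw [← h]
    have hu₁pos : 0 < u₁ := hφ' _
    have hu₂le : u₂ ≤ D := hφ'leD _ (by linarith)
    refine ⟨min (y₀ - u₁) (u₂ - y₀), lt_min (by linarith) (by linarith), ?_⟩
    intro y hy
    rw [Real.dist_eq] at hy
    have hy1 : u₁ < y := by
      have := abs_lt.mp (lt_of_lt_of_le hy (min_le_left _ _))
      linarith [this.1]
    have hy2 : y < u₂ := by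
      have := abs_lt.mp (lt_of_lt_of_le hy (min_le_right _ _))
      linarith [this.2]
    have hymem : y ∈ Set.Ioc 0 D := ⟨lt_trans hu₁pos hy1, le_trans hy2.le hu₂le⟩
    have hb1 : ψ y ≤ ψ y₀ + ε' := by
      have h := hψ_anti u₁ y ⟨hu₁pos, hφ'leD _ (by linarith)⟩ hymem hy1.le
      rwa [hu₁def, hψinv _ (by linarith)] at h
    have hb2 : ψ y₀ - ε' ≤ ψ y := by
      have h := hψ_anti y u₂ hymem ⟨hφ' _, hu₂le⟩ hy2.le
      rwa [hu₂def, hψinv _ (by linarith)] at h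
    rw [Real.dist_eq, abs_lt]
    constructor <;> linarith
  have hψ_deriv : ∀ y : ℝ, y ∈ Set.Ioo 0 D → HasDerivAt ψ ((deriv (deriv φ) (ψ y))⁻¹) y := by
    intro y hy
    apply HasDerivAt.of_local_left_inverse (hψ_cont y hy) ((hd2 (ψ y)).hasDerivAt)
    · exact ne_of_lt (hφ''neg _ (hψ_pos y hy))
    · filter_upwards [IsOpen.mem_nhds isOpen_Ioo hy] with z hz using hψ_eq z hz
  have hψ_dval : ∀ y : ℝ, y ∈ Set.Ioo 0 D → deriv ψ y = (deriv (deriv φ) (ψ y))⁻¹ :=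
    fun y hy => (hψ_deriv y hy).deriv
  have hψ_dneg : ∀ y : ℝ, y ∈ Set.Ioo 0 D → deriv ψ y < 0 := by
    intro y hy
    rw [hψ_dval y hy]
    exact inv_lt_zero'.mpr (hφ''neg _ (hψ_pos y hy))
  have hψ_hasDeriv' : ∀ y : ℝ, y ∈ Set.Ioo 0 D → HasDerivAt ψ (deriv ψ y) y := by
    intro y hy
    rw [hψ_dval y hy]
    exact hψ_deriv y hy
  -- ## First and second order conditions at a local max on P
  have variational : ∀ (x : EuclideanSpace ℝ (Fin (n+1))), x ∈ P →
      (∃ ε > 0, ∀ z ∈ P, ‖z - x‖ < ε → f z ≤ f x) →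
      ∀ v : EuclideanSpace ℝ (Fin (n+1)), (∑ j, l j * v j = 0) →
        (∑ j, c j * (deriv φ (x j) * v j) = 0) ∧
        (∑ j, c j * (deriv (deriv φ) (x j) * v j * v j) ≤ 0) := by
    intro x hxP hloc v hv
    obtain ⟨ε, hε, hmaxP⟩ := hloc
    have hxb : ∑ j, l j * x j = b := by rw [hP] at hxP; exact hxP
    set g : ℝ → ℝ := fun t => ∑ j, c j * φ (x j + t * v j) with hgdef
    set g' : ℝ → ℝ := fun t => ∑ j, c j * (deriv φ (x j + t * v j) * v j) with hg'def
    have hlin : ∀ (j : Fin (n+1)) (t : ℝ), HasDerivAt (fun s : ℝ => x j + s * v j) (v j) t := by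
      intro j t
      simpa using ((hasDerivAt_id t).mul_const (v j)).const_add (x j)
    have hgd : ∀ t, HasDerivAt g (g' t) t := by
      intro t
      apply HasDerivAt.fun_sum
      intro j _
      exact ((hd1 _).hasDerivAt.comp t (hlin j t)).const_mul (c j)
    have hg'd : HasDerivAt g' (∑ j, c j * (deriv (deriv φ) (x j + 0 * v j) * v j * v j)) 0 := by
      apply HasDerivAt.fun_sum
      intro j _
      exact (((hd2 _).hasDerivAt.comp 0 (hlin j 0)).mul_const (v j)).const_mul (c j)
    have happly : ∀ (t : ℝ) (j : Fin (n+1)), (x + t • v) j = x j + t * v j := by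
      intro t j
      simp [PiLp.add_apply, PiLp.smul_apply, smul_eq_mul]
    have hxmem : ∀ t : ℝ, x + t • v ∈ P := by
      intro t
      rw [hP]
      show ∑ j, l j * (x + t • v) j = b
      have : ∀ j : Fin (n+1), l j * (x + t • v) j = l j * x j + t * (l j * v j) := by
        intro j; rw [happly]; ring
      rw [Finset.sum_congr rfl (fun j _ => this j), Finset.sum_add_distrib, ← Finset.mul_sum, hv, hxb]
      ring
    have hgf : ∀ t : ℝ, g t = f (x + t • v) := by
      intro t
      rw [hf]
      apply Finset.sum_congr rfl
      intro j _
      rw [happly]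
    have hg0 : g 0 = f x := by
      rw [hgf 0]
      congr 1
      simp
    have hglocal : IsLocalMax g 0 := by
      apply Metric.eventually_nhds_iff.mpr
      refine ⟨ε / (‖v‖ + 1), by positivity, ?_⟩
      intro t ht
      rw [Real.dist_eq, sub_zero] at ht
      rw [hgf t, hg0]
      apply hmaxP _ (hxmem t)
      rw [add_sub_cancel_left, norm_smul, Real.norm_eq_abs]
      have hv1 : (0:ℝ) ≤ ‖v‖ := norm_nonneg v
      have habs : 0 ≤ |t| := abs_nonneg t
      calc |t| * ‖v‖ ≤ |t| * (‖v‖ + 1) := by nlinarith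
        _ < ε / (‖v‖ + 1) * (‖v‖ + 1) := by
            apply mul_lt_mul_of_pos_right ht (by positivity)
        _ = ε := by field_simp
    have hFO' : g' 0 = 0 := by
      rw [← (hgd 0).deriv]
      exact hglocal.deriv_eq_zero
    have hFO : ∑ j, c j * (deriv φ (x j) * v j) = 0 := by
      rw [hg'def] at hFO'
      simpa using hFO'
    constructor
    · exact hFO
    · have hSO := second_deriv_nonpos_of_isLocalMax hgd hFO' hg'd hglocal
      simpa using hSO
  -- pairwise first-order conditions
  have pairFO : ∀ (x : EuclideanSpace ℝ (Fin (n+1))), x ∈ P →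
      (∃ ε > 0, ∀ z ∈ P, ‖z - x‖ < ε → f z ≤ f x) →
      ∀ i j : Fin (n+1), (c i * deriv φ (x i)) * l j = (c j * deriv φ (x j)) * l i := by
    intro x hxP hloc i j
    set v : EuclideanSpace ℝ (Fin (n+1)) :=
      WithLp.toLp 2 (fun k => (if k = i then l j else 0) - (if k = j then l i else 0)) with hvdef
    have hvapp : ∀ k, v k = (if k = i then l j else 0) - (if k = j then l i else 0) :=
      fun k => rfl
    have hsum : ∀ w : Fin (n+1) → ℝ, ∑ k, w k * v k = w i * l j - w j * l i := by
      intro w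
      have hterm : ∀ k : Fin (n+1), w k * v k =
          (if k = i then w k * l j else 0) - (if k = j then w k * l i else 0) := by
        intro k
        rw [hvapp]
        split_ifs <;> ring
      rw [Finset.sum_congr rfl (fun k _ => hterm k), Finset.sum_sub_distrib]
      simp [Finset.sum_ite_eq']
    have hlv : ∑ k, l k * v k = 0 := by rw [hsum]; ring
    have hFO := (variational x hxP hloc v hlv).1
    have h2 : ∑ k, (c k * deriv φ (x k)) * v k = 0 := by
      rw [← hFO]; apply Finset.sum_congr rfl; intro k _; ring
    rw [hsum] at h2
    linarith
  -- ## Lagrange multipliers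
  have mkβ : ∀ (x : EuclideanSpace ℝ (Fin (n+1))), x ∈ P →
      (∃ ε > 0, ∀ z ∈ P, ‖z - x‖ < ε → f z ≤ f x) →
      ∃ β : ℝ, 0 < β ∧ ∀ j, deriv φ (x j) = β * q j := by
    intro x hxP hloc
    refine ⟨c 0 * deriv φ (x 0) / l 0, div_pos (mul_pos (hc 0) (hφ' _)) (hl 0), ?_⟩
    intro j
    have h := pairFO x hxP hloc 0 j
    rw [hq j]
    have hl0 : l 0 ≠ 0 := (hl 0).ne'
    have hcj : c j ≠ 0 := (hc j).ne'
    have h2 : deriv φ (x j) = (c 0 * deriv φ (x 0) * l j) / (l 0 * c j) := by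
      rw [eq_div_iff (mul_ne_zero hl0 hcj)]
      linear_combination -h
    rw [h2]; ring
  obtain ⟨β₀, hβ₀pos, hβ₀⟩ := mkβ x₀ hx₀P hloc₀
  obtain ⟨β₁, hβ₁pos, hβ₁⟩ := mkβ x₁ hx₁P hloc₁
  have hqpos : ∀ j, 0 < q j := fun j => by rw [hq j]; exact div_pos (hl j) (hc j)
  have hx₀mem : ∀ j, β₀ * q j ∈ Set.Ioo 0 D := by
    intro j
    refine ⟨mul_pos hβ₀pos (hqpos j), ?_⟩
    rw [← hβ₀ j]; exact hφ'lt _ (hpos₀ j)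
  have hx₀coord : ∀ j, ψ (β₀ * q j) = x₀ j := by
    intro j; rw [← hβ₀ j]; exact hψinv _ (hpos₀ j).le
  have hx₁mem : ∀ j, β₁ * q j ∈ Set.Ioo 0 D := by
    intro j
    refine ⟨mul_pos hβ₁pos (hqpos j), ?_⟩
    by_cases hj : j = Fin.last n
    · subst hj
      rw [← hβ₁ _, ← hφ'even (x₁ (Fin.last n))]
      exact hφ'lt _ (by linarith [hneg₁])
    · rw [← hβ₁ j]; exact hφ'lt _ (hpos₁ j hj)
  have hx₁coord : ∀ j, j ≠ Fin.last n → ψ (β₁ * q j) = x₁ j := by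
    intro j hj; rw [← hβ₁ j]; exact hψinv _ (hpos₁ j hj).le
  have hx₁last : ψ (β₁ * q (Fin.last n)) = -(x₁ (Fin.last n)) := by
    rw [← hβ₁ _, ← hφ'even (x₁ (Fin.last n))]
    exact hψinv _ (by linarith)
  -- ## choice of β₂ > max β₀ β₁ with all arguments staying in the interval
  obtain ⟨jm, -, hjm⟩ := Finset.exists_mem_eq_sup' (Finset.univ_nonempty) q
  set Q := Finset.univ.sup' Finset.univ_nonempty q with hQdef
  have hQub : ∀ j, q j ≤ Q := fun j => Finset.le_sup' q (Finset.mem_univ j)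
  set Mβ := max β₀ β₁ with hMβdef
  have hMβpos : 0 < Mβ := lt_of_lt_of_le hβ₀pos (le_max_left _ _)
  have hQpos : 0 < Q := by rw [hjm]; exact hqpos jm
  have hMβQ : Mβ * Q < D := by
    rw [hjm]
    rcases max_cases β₀ β₁ with ⟨h1, h2⟩ | ⟨h1, h2⟩ <;> rw [hMβdef, h1]
    · exact (hx₀mem jm).2
    · exact (hx₁mem jm).2
  set β₂ := (Mβ + D / Q) / 2 with hβ₂def
  have hMβltDQ : Mβ < D / Q := (lt_div_iff₀ hQpos).mpr hMβQ
  have hβ₂gt : Mβ < β₂ := by rw [hβ₂def]; linarith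
  have hβ₂lt : β₂ < D / Q := by rw [hβ₂def]; linarith
  have hβ₂pos : 0 < β₂ := lt_trans hMβpos hβ₂gt
  have hβ₂mem : ∀ j, β₂ * q j ∈ Set.Ioo 0 D := by
    intro j
    refine ⟨mul_pos hβ₂pos (hqpos j), ?_⟩
    calc β₂ * q j ≤ β₂ * Q := mul_le_mul_of_nonneg_left (hQub j) hβ₂pos.le
      _ < D := (lt_div_iff₀ hQpos).mp hβ₂lt
  have hβ₀₂ : β₀ < β₂ := lt_of_le_of_lt (le_max_left _ _) hβ₂gt
  have hβ₁₂ : β₁ < β₂ := lt_of_le_of_lt (le_max_right _ _) hβ₂gt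
  -- ## second order condition at x₁
  obtain ⟨sψ, hsψdef⟩ : ∃ g : Fin (n+1) → ℝ, g = fun j => -(deriv ψ (β₁ * q j)) := ⟨_, rfl⟩
  have hsψ : ∀ j, sψ j = -(deriv ψ (β₁ * q j)) := fun j => by rw [hsψdef]
  have hsψpos : ∀ j, 0 < sψ j := by
    intro j
    have := hψ_dneg _ (hx₁mem j)
    rw [hsψ]; linarith
  have hφ''x₁ : ∀ j, j ≠ Fin.last n → deriv (deriv φ) (x₁ j) = (-(sψ j))⁻¹ := by
    intro j hj
    have h := hψ_dval _ (hx₁mem j)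
    rw [hx₁coord j hj] at h
    rw [hsψ, neg_neg, h, inv_inv]
  have hφ''lastval : deriv (deriv φ) (x₁ (Fin.last n)) = (sψ (Fin.last n))⁻¹ := by
    have h := hψ_dval _ (hx₁mem (Fin.last n))
    rw [hx₁last, hφ''odd] at h
    have h2 : sψ (Fin.last n) = (deriv (deriv φ) (x₁ (Fin.last n)))⁻¹ := by
      rw [hsψ, h]
      simp [inv_neg]
    rw [h2, inv_inv]
  have h0ne : (0 : Fin (n+1)) ≠ Fin.last n := by
    intro h
    have h' := congrArg Fin.val h
    simp only [Fin.val_last] at h'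
    have h0 : (0 : Fin (n+1)).val = 0 := rfl
    omega
  have hEne : (Finset.univ.erase (Fin.last n) : Finset (Fin (n+1))).Nonempty :=
    ⟨0, Finset.mem_erase.mpr ⟨h0ne, Finset.mem_univ _⟩⟩
  obtain ⟨Sg, hSgdef⟩ : ∃ s : ℝ,
      s = ∑ k ∈ Finset.univ.erase (Fin.last n), l k * q k * sψ k := ⟨_, rfl⟩
  have hSgpos : 0 < Sg := by
    rw [hSgdef]
    apply Finset.sum_pos _ hEne
    intro k _
    have h1 := hsψpos k
    have h2 := hl k
    have h3 := hqpos k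
    positivity
  obtain ⟨vS, hvSapp⟩ : ∃ v : EuclideanSpace ℝ (Fin (n+1)),
      ∀ k, v k = if k = Fin.last n then -Sg / l (Fin.last n) else q k * sψ k :=
    ⟨WithLp.toLp 2 (fun k => if k = Fin.last n then -Sg / l (Fin.last n) else q k * sψ k), fun k => rfl⟩
  have hlastE : Fin.last n ∈ (Finset.univ : Finset (Fin (n+1))) := Finset.mem_univ _
  have hlv : ∑ k, l k * vS k = 0 := by
    rw [← Finset.sum_erase_add _ _ hlastE]
    have h1 : ∑ k ∈ Finset.univ.erase (Fin.last n), l k * vS k = Sg := by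
      rw [hSgdef]
      apply Finset.sum_congr rfl
      intro k hk
      rw [hvSapp, if_neg (Finset.mem_erase.mp hk).1]
      ring
    rw [h1, hvSapp, if_pos rfl]
    have hL := (hl (Fin.last n)).ne'
    field_simp
    ring
  have hSO := (variational x₁ hx₁P hloc₁ vS hlv).2
  rw [← Finset.sum_erase_add _ _ hlastE] at hSO
  have h1 : ∑ k ∈ Finset.univ.erase (Fin.last n),
      c k * (deriv (deriv φ) (x₁ k) * vS k * vS k) = -Sg := by
    have h2 : ∀ k ∈ Finset.univ.erase (Fin.last n),
        c k * (deriv (deriv φ) (x₁ k) * vS k * vS k) = -(l k * q k * sψ k) := by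
      intro k hk
      have hk' := (Finset.mem_erase.mp hk).1
      rw [hvSapp, if_neg hk', hφ''x₁ k hk', hq k]
      have hs := (hsψpos k).ne'
      have hc' := (hc k).ne'
      rw [inv_neg]
      field_simp
    rw [Finset.sum_congr rfl h2, hSgdef, ← Finset.sum_neg_distrib]
  have h2 : c (Fin.last n) * (deriv (deriv φ) (x₁ (Fin.last n)) * vS (Fin.last n) * vS (Fin.last n))
      = c (Fin.last n) * Sg ^ 2 / (sψ (Fin.last n) * l (Fin.last n) ^ 2) := by
    rw [hvSapp, if_pos rfl, hφ''lastval]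
    have hs := (hsψpos (Fin.last n)).ne'
    have hL := (hl (Fin.last n)).ne'
    field_simp
  have hSineq : Sg ≤ l (Fin.last n) * q (Fin.last n) * sψ (Fin.last n) := by
    have hLpos := hl (Fin.last n)
    have hCpos := hc (Fin.last n)
    have hSpos := hsψpos (Fin.last n)
    rw [h1, h2] at hSO
    have h3 : c (Fin.last n) * Sg ^ 2 / (sψ (Fin.last n) * l (Fin.last n) ^ 2) ≤ Sg := by
      linarith only [hSO]
    rw [div_le_iff₀ (by positivity)] at h3
    have key : c (Fin.last n) * Sg ≤ sψ (Fin.last n) * l (Fin.last n) ^ 2 := by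
      nlinarith only [hSgpos, h3]
    have hql : q (Fin.last n) = l (Fin.last n) / c (Fin.last n) := hq _
    rw [hql, show l (Fin.last n) * (l (Fin.last n) / c (Fin.last n)) * sψ (Fin.last n)
        = (sψ (Fin.last n) * l (Fin.last n) ^ 2) / c (Fin.last n) from by field_simp,
      le_div_iff₀ hCpos]
    linarith only [key]
  -- ## the key per-coordinate estimate (†)
  have hdagger : ∀ k, k ∈ Finset.univ.erase (Fin.last n) →
      ψ (β₁ * q k) - ψ (β₂ * q k) ≤
        (q k * sψ k) / (q (Fin.last n) * sψ (Fin.last n)) * ψ (β₁ * q (Fin.last n)) := by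
    intro k hk
    have hkne := (Finset.mem_erase.mp hk).1
    have hkq : q k ≠ q (Fin.last n) := fun h => hkne (hqinj h)
    have hqLpos := hqpos (Fin.last n)
    have hqkpos := hqpos k
    have hsLpos := hsψpos (Fin.last n)
    have hskpos := hsψpos k
    have hmemk : ∀ β : ℝ, β₁ ≤ β → β ≤ β₂ → ∀ j : Fin (n+1), β * q j ∈ Set.Ioo 0 D := by
      intro β h1 h2 j
      constructor
      · exact mul_pos (lt_of_lt_of_le hβ₁pos h1) (hqpos j)
      · calc β * q j ≤ β₂ * q j := mul_le_mul_of_nonneg_right h2 (hqpos j).le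
          _ < D := (hβ₂mem j).2
    rcases lt_or_gt_of_ne hkq with hA | hB
    · -- Case A : q k < q (Fin.last n), use (A2)
      have hmono := hA2 (q (Fin.last n)) (q k) hqkpos hA
      have hdom : ∀ β : ℝ, β₁ ≤ β → β ≤ β₂ → β ∈ Set.Ioo 0 (D / q (Fin.last n)) := by
        intro β h1 h2
        refine ⟨lt_of_lt_of_le hβ₁pos h1, ?_⟩
        rw [lt_div_iff₀ hqLpos]
        exact ((hmemk β h1 h2 (Fin.last n)).2)
      have hratio : ∀ β, β₁ ≤ β → β ≤ β₂ →
          sψ (Fin.last n) * (-(deriv ψ (β * q k))) ≤ sψ k * (-(deriv ψ (β * q (Fin.last n)))) := by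
        intro β h1 h2
        rcases eq_or_lt_of_le h1 with he | hlt
        · rw [← he, hsψ, hsψ]
          nlinarith []
        · have h := hmono (hdom β₁ le_rfl hβ₁₂.le) (hdom β h1 h2) hlt
          simp only at h
          have hb1 := hψ_dneg _ (hx₁mem (Fin.last n))
          have hb2 := hψ_dneg _ (hx₁mem k)
          have hb3 := hψ_dneg _ (hmemk β h1 h2 (Fin.last n))
          have hb4 := hψ_dneg _ (hmemk β h1 h2 k)
          have hrw : ∀ u v : ℝ, u / v = (-u) / (-v) := fun u v => (neg_div_neg_eq u v).symm
          rw [hrw (deriv ψ (β₁ * q (Fin.last n))) (deriv ψ (β₁ * q k)),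
            hrw (deriv ψ (β * q (Fin.last n))) (deriv ψ (β * q k)),
            div_lt_div_iff₀ (by linarith) (by linarith)] at h
          rw [hsψ, hsψ]
          nlinarith [h]
      have hcomp : ∀ (j : Fin (n+1)) (β : ℝ), β₁ ≤ β → β ≤ β₂ →
          HasDerivAt (fun t => ψ (t * q j)) (deriv ψ (β * q j) * q j) β := by
        intro j β h1 h2
        exact (hψ_hasDeriv' _ (hmemk β h1 h2 j)).comp β (hasDerivAt_mul_const (q j))
      set κ := (q k * sψ k) / (q (Fin.last n) * sψ (Fin.last n)) with hκdef
      have hκpos : 0 < κ := by rw [hκdef]; positivity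
      have hwmono : MonotoneOn (fun β => ψ (β * q k) - κ * ψ (β * q (Fin.last n)))
          (Set.Icc β₁ β₂) := by
        have hwd : ∀ β ∈ Set.Icc β₁ β₂, HasDerivAt
            (fun β => ψ (β * q k) - κ * ψ (β * q (Fin.last n)))
            (deriv ψ (β * q k) * q k - κ * (deriv ψ (β * q (Fin.last n)) * q (Fin.last n))) β := by
          intro β hb
          exact (hcomp k β hb.1 hb.2).sub ((hcomp (Fin.last n) β hb.1 hb.2).const_mul κ)
        apply monotoneOn_of_deriv_nonneg (convex_Icc _ _)
        · exact fun β hb => ((hwd β hb).continuousAt).continuousWithinAt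
        · intro β hb
          rw [interior_Icc] at hb
          exact ((hwd β ⟨hb.1.le, hb.2.le⟩).differentiableAt).differentiableWithinAt
        · intro β hb
          rw [interior_Icc] at hb
          rw [(hwd β ⟨hb.1.le, hb.2.le⟩).deriv]
          have hr := hratio β hb.1.le hb.2.le
          have key2 : q k * (-(deriv ψ (β * q k))) ≤
              κ * (q (Fin.last n) * (-(deriv ψ (β * q (Fin.last n))))) := by
            rw [hκdef, div_mul_eq_mul_div, le_div_iff₀ (by positivity)]
            nlinarith [mul_le_mul_of_nonneg_left hr (le_of_lt (mul_pos hqkpos hqLpos))]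
          linarith [key2]
      have hw := hwmono (Set.mem_Icc.mpr ⟨le_rfl, hβ₁₂.le⟩)
        (Set.mem_Icc.mpr ⟨hβ₁₂.le, le_rfl⟩) hβ₁₂.le
      simp only at hw
      have hψ₂L : 0 < ψ (β₂ * q (Fin.last n)) := hψ_pos _ (hβ₂mem (Fin.last n))
      nlinarith [mul_pos hκpos hψ₂L]
    · -- Case B : q (Fin.last n) < q k, use (A4)
      have hmono := hA4 (q k) (q (Fin.last n)) hqLpos hB
      have hβ₁dom : β₁ ∈ Set.Ioo 0 (D / q k) := ⟨hβ₁pos, by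
        rw [lt_div_iff₀ hqkpos]; exact (hx₁mem k).2⟩
      have hψ₁L : 0 < ψ (β₁ * q (Fin.last n)) := hψ_pos _ (hx₁mem (Fin.last n))
      have hnum : HasDerivAt (fun t => ψ (t * q k)) (deriv ψ (β₁ * q k) * q k) β₁ :=
        (hψ_hasDeriv' _ (hx₁mem k)).comp β₁ (hasDerivAt_mul_const (q k))
      have hden : HasDerivAt (fun t => ψ (t * q (Fin.last n)))
          (deriv ψ (β₁ * q (Fin.last n)) * q (Fin.last n)) β₁ :=
        (hψ_hasDeriv' _ (hx₁mem (Fin.last n))).comp β₁ (hasDerivAt_mul_const (q (Fin.last n)))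
      have hratioD := hnum.div hden (ne_of_gt hψ₁L)
      have hDle := hasDerivAt_nonpos_of_strictAntiOn hβ₁dom hratioD hmono
      have hnumle : deriv ψ (β₁ * q k) * q k * ψ (β₁ * q (Fin.last n)) -
          ψ (β₁ * q k) * (deriv ψ (β₁ * q (Fin.last n)) * q (Fin.last n)) ≤ 0 := by
        by_contra hcon
        push_neg at hcon
        have hden2 : 0 < ψ (β₁ * q (Fin.last n)) ^ 2 := by positivity
        have := div_pos hcon hden2
        linarith
      have hψ₁k : 0 < ψ (β₁ * q k) := hψ_pos _ (hx₁mem k)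
      have hψ₂k : 0 ≤ ψ (β₂ * q k) := (hψ_pos _ (hβ₂mem k)).le
      have hkey : ψ (β₁ * q k) ≤
          (q k * sψ k) / (q (Fin.last n) * sψ (Fin.last n)) * ψ (β₁ * q (Fin.last n)) := by
        rw [div_mul_eq_mul_div, le_div_iff₀ (by positivity), hsψ k, hsψ (Fin.last n)]
        linarith [hnumle]
      linarith
  -- ## final contradiction
  have hψ₁L : 0 < ψ (β₁ * q (Fin.last n)) := hψ_pos _ (hx₁mem (Fin.last n))
  have hψ₂L : 0 < ψ (β₂ * q (Fin.last n)) := hψ_pos _ (hβ₂mem (Fin.last n))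
  have hb₀ : b = ∑ j, l j * ψ (β₀ * q j) := by
    rw [hP] at hx₀P
    rw [← hx₀P]
    exact Finset.sum_congr rfl (fun j _ => by rw [hx₀coord j])
  have hb₁ : b = (∑ k ∈ Finset.univ.erase (Fin.last n), l k * ψ (β₁ * q k))
      - l (Fin.last n) * ψ (β₁ * q (Fin.last n)) := by
    have hsplit : ∑ j, l j * x₁ j = b := by rw [hP] at hx₁P; exact hx₁P
    rw [← Finset.sum_erase_add _ _ hlastE] at hsplit
    have hsame : ∑ k ∈ Finset.univ.erase (Fin.last n), l k * ψ (β₁ * q k)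
        = ∑ k ∈ Finset.univ.erase (Fin.last n), l k * x₁ k :=
      Finset.sum_congr rfl (fun k hk => by rw [hx₁coord k (Finset.mem_erase.mp hk).1])
    rw [hsame, hx₁last]
    linarith [hsplit]
  have hsumest : (∑ k ∈ Finset.univ.erase (Fin.last n), l k * ψ (β₁ * q k))
      ≤ (∑ k ∈ Finset.univ.erase (Fin.last n), l k * ψ (β₂ * q k))
        + l (Fin.last n) * ψ (β₁ * q (Fin.last n)) := by
    have h7 : ∀ k ∈ Finset.univ.erase (Fin.last n),
        l k * ψ (β₁ * q k) ≤ l k * ψ (β₂ * q k)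
          + (l k * q k * sψ k) *
            (ψ (β₁ * q (Fin.last n)) / (q (Fin.last n) * sψ (Fin.last n))) := by
      intro k hk
      have hd := hdagger k hk
      have hlk := hl k
      have hmul := mul_le_mul_of_nonneg_left hd hlk.le
      have heq : l k * ((q k * sψ k) / (q (Fin.last n) * sψ (Fin.last n)) * ψ (β₁ * q (Fin.last n)))
          = (l k * q k * sψ k) *
            (ψ (β₁ * q (Fin.last n)) / (q (Fin.last n) * sψ (Fin.last n))) := by
        field_simp
      linarith [hmul, heq.le, heq.ge]
    have hsum := Finset.sum_le_sum h7
    rw [Finset.sum_add_distrib, ← Finset.sum_mul, ← hSgdef] at hsum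
    have hbound : Sg * (ψ (β₁ * q (Fin.last n)) / (q (Fin.last n) * sψ (Fin.last n)))
        ≤ l (Fin.last n) * ψ (β₁ * q (Fin.last n)) := by
      have hqLpos := hqpos (Fin.last n)
      have hsLpos := hsψpos (Fin.last n)
      have hdivpos : 0 ≤ ψ (β₁ * q (Fin.last n)) / (q (Fin.last n) * sψ (Fin.last n)) := by
        positivity
      calc Sg * (ψ (β₁ * q (Fin.last n)) / (q (Fin.last n) * sψ (Fin.last n)))
          ≤ (l (Fin.last n) * q (Fin.last n) * sψ (Fin.last n)) *
            (ψ (β₁ * q (Fin.last n)) / (q (Fin.last n) * sψ (Fin.last n))) :=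
            mul_le_mul_of_nonneg_right hSineq hdivpos
        _ = l (Fin.last n) * ψ (β₁ * q (Fin.last n)) := by field_simp
    linarith [hsum, hbound]
  have hstrict : (∑ j, l j * ψ (β₂ * q j)) < ∑ j, l j * ψ (β₀ * q j) := by
    apply Finset.sum_lt_sum_of_nonempty Finset.univ_nonempty
    intro j _
    have hlt := hψ_lt (β₀ * q j) (β₂ * q j) (hx₀mem j) (hβ₂mem j)
      (mul_lt_mul_of_pos_right hβ₀₂ (hqpos j))
    exact mul_lt_mul_of_pos_left hlt (hl j)
  have hsplit₂ : ∑ j, l j * ψ (β₂ * q j)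
      = (∑ k ∈ Finset.univ.erase (Fin.last n), l k * ψ (β₂ * q k))
        + l (Fin.last n) * ψ (β₂ * q (Fin.last n)) := (Finset.sum_erase_add _ _ hlastE).symm
  have hfinal : b < b := by
    have hlast_nonneg : 0 ≤ l (Fin.last n) * ψ (β₂ * q (Fin.last n)) :=
      (mul_pos (hl (Fin.last n)) hψ₂L).le
    calc b = (∑ k ∈ Finset.univ.erase (Fin.last n), l k * ψ (β₁ * q k))
        - l (Fin.last n) * ψ (β₁ * q (Fin.last n)) := hb₁
      _ ≤ ∑ k ∈ Finset.univ.erase (Fin.last n), l k * ψ (β₂ * q k) := by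
          linarith [hsumest]
      _ ≤ ∑ j, l j * ψ (β₂ * q j) := by rw [hsplit₂]; linarith [hlast_nonneg]
      _ < ∑ j, l j * ψ (β₀ * q j) := hstrict
      _ = b := hb₀.symm
  exact absurd hfinal (lt_irrefl b)
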